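/- Let μ be a probability measure on a measurable space Ω and let U : Ω → ℝ be measurable such that the law of U equals the Lebesgue measure restricted to [0,1] with density d, where c_* ≤ d(t) ≤ c^* for all t ∈ [0,1] and 0 < c_* ≤ c^*. Let A ⊆ Ω be a measurable set and let s, e, p be real numbers with 0 ≤ s ≤ e < p ≤ 1, and suppose μ(A ∩ {ω : U(ω) ≥ e}) = 0. Then μ({ω : U(ω) ≥ s}) > 0 and μ(A ∩ {ω : U(ω) ≥ s}) / μ({ω : U(ω) ≥ s}) ≤ c^* · (e − s) / (c_* · (p − e)). Moreover, if in addition α > 0, ε > 0, l = c^*/c_*, and e − s ≤ (ε/(3 l α)) · (p − e), then μ(A ∩ {ω : U(ω) ≥ s}) / μ({ω : U(ω) ≥ s}) ≤ ε/(3α). -/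

import Mathlib

open MeasureTheory

/-- Eq. (2)–(3) of the paper: under the margin density assumption, if the event `A` is null on
`{U ≥ e}` and `0 ≤ s ≤ e < p ≤ 1`, then the conditional probability of `A` given `{U ≥ s}`
is at most `c^*·(e − s) / (c_*·(p − e))`; if moreover `e − s ≤ (ε/(3lα))·(p − e)` with
`l = c^*/c_*`, this conditional probability is at most `ε/(3α)`. -/
theorem conditional_error_bound {Ω : Type*} [MeasurableSpace Ω]
    (μ : Measure Ω) [IsProbabilityMeasure μ]
    (U : Ω → ℝ) (hU : Measurable U)
    (d : ℝ → ℝ) (cstar cStar : ℝ) (hc0 : 0 < cstar) (hcc : cstar ≤ cStar)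
    (hlaw : μ.map U =
      (volume.restrict (Set.Icc (0 : ℝ) 1)).withDensity (fun t => ENNReal.ofReal (d t)))
    (hd : ∀ t ∈ Set.Icc (0 : ℝ) 1, cstar ≤ d t ∧ d t ≤ cStar)
    (A : Set Ω) (hA : MeasurableSet A)
    (s e p : ℝ) (hs : 0 ≤ s) (hse : s ≤ e) (hep : e < p) (hp : p ≤ 1)
    (hnull : μ (A ∩ {ω | U ω ≥ e}) = 0) :
    0 < μ {ω | U ω ≥ s} ∧
      (μ (A ∩ {ω | U ω ≥ s})).toReal / (μ {ω | U ω ≥ s}).toReal ≤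
        cStar * (e - s) / (cstar * (p - e)) ∧
      ∀ α ε l : ℝ, 0 < α → 0 < ε → l = cStar / cstar →
        e - s ≤ ε / (3 * l * α) * (p - e) →
        (μ (A ∩ {ω | U ω ≥ s})).toReal / (μ {ω | U ω ≥ s}).toReal ≤ ε / (3 * α) := by
  have hs1 : s < 1 := lt_of_le_of_lt hse (lt_of_lt_of_le hep hp)
  have hpe : (0:ℝ) < p - e := by linarith
  have hmap : ∀ (S : Set ℝ), MeasurableSet S →
      μ (U ⁻¹' S) = ∫⁻ t in S ∩ Set.Icc (0:ℝ) 1, ENNReal.ofReal (d t) := by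
    intro S hS
    rw [← Measure.map_apply hU hS, hlaw, withDensity_apply _ hS,
      Measure.restrict_restrict hS]
  -- denominator
  have hD : μ {ω | U ω ≥ s} = ∫⁻ t in Set.Ici s ∩ Set.Icc (0:ℝ) 1, ENNReal.ofReal (d t) := by
    have : {ω | U ω ≥ s} = U ⁻¹' Set.Ici s := rfl
    rw [this, hmap _ measurableSet_Ici]
  have hIci : Set.Ici s ∩ Set.Icc (0:ℝ) 1 = Set.Icc s 1 := by
    ext t
    simp only [Set.mem_inter_iff, Set.mem_Ici, Set.mem_Icc]
    constructor
    · rintro ⟨h1, _, h3⟩; exact ⟨h1, h3⟩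
    · rintro ⟨h1, h2⟩; exact ⟨h1, le_trans hs h1, h2⟩
  have hDlow : ENNReal.ofReal cstar * ENNReal.ofReal (1 - s) ≤ μ {ω | U ω ≥ s} := by
    rw [hD, hIci]
    calc ENNReal.ofReal cstar * ENNReal.ofReal (1 - s)
        = ∫⁻ _ in Set.Icc s 1, ENNReal.ofReal cstar := by
          rw [setLIntegral_const, Real.volume_Icc]
      _ ≤ ∫⁻ t in Set.Icc s 1, ENNReal.ofReal (d t) := by
          refine lintegral_mono_ae ?_
          filter_upwards [ae_restrict_mem measurableSet_Icc] with t ht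
          exact ENNReal.ofReal_le_ofReal (hd t ⟨le_trans hs ht.1, ht.2⟩).1
  have hDpos : 0 < μ {ω | U ω ≥ s} := by
    refine lt_of_lt_of_le ?_ hDlow
    apply ENNReal.mul_pos <;> simp [ENNReal.ofReal_pos, hc0] <;> linarith
  have hDfin : μ {ω | U ω ≥ s} ≠ ⊤ := measure_ne_top μ _
  -- numerator
  have hsub : A ∩ {ω | U ω ≥ s} ⊆ (A ∩ {ω | U ω ≥ e}) ∪ U ⁻¹' Set.Ico s e := by
    rintro ω ⟨hωA, hωs⟩
    by_cases h : U ω ≥ e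
    · exact Or.inl ⟨hωA, h⟩
    · exact Or.inr ⟨hωs, lt_of_not_ge h⟩
  have hNum : μ (A ∩ {ω | U ω ≥ s}) ≤ ENNReal.ofReal cStar * ENNReal.ofReal (e - s) := by
    calc μ (A ∩ {ω | U ω ≥ s}) ≤ μ ((A ∩ {ω | U ω ≥ e}) ∪ U ⁻¹' Set.Ico s e) :=
          measure_mono hsub
      _ ≤ μ (A ∩ {ω | U ω ≥ e}) + μ (U ⁻¹' Set.Ico s e) := measure_union_le _ _
      _ = μ (U ⁻¹' Set.Ico s e) := by rw [hnull, zero_add]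
      _ = ∫⁻ t in Set.Ico s e ∩ Set.Icc (0:ℝ) 1, ENNReal.ofReal (d t) :=
          hmap _ measurableSet_Ico
      _ ≤ ∫⁻ _ in Set.Ico s e ∩ Set.Icc (0:ℝ) 1, ENNReal.ofReal cStar := by
          refine lintegral_mono_ae ?_
          filter_upwards [ae_restrict_mem (measurableSet_Ico.inter measurableSet_Icc)]
            with t ht
          exact ENNReal.ofReal_le_ofReal (hd t ht.2).2
      _ = ENNReal.ofReal cStar * volume (Set.Ico s e ∩ Set.Icc (0:ℝ) 1) :=
          setLIntegral_const _ _
      _ ≤ ENNReal.ofReal cStar * volume (Set.Ico s e) := by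
          gcongr; exact Set.inter_subset_left
      _ = ENNReal.ofReal cStar * ENNReal.ofReal (e - s) := by rw [Real.volume_Ico]
  -- real versions
  have hNfin : μ (A ∩ {ω | U ω ≥ s}) ≠ ⊤ := measure_ne_top μ _
  have hNumR : (μ (A ∩ {ω | U ω ≥ s})).toReal ≤ cStar * (e - s) := by
    have := ENNReal.toReal_mono (by finiteness) hNum
    rwa [ENNReal.toReal_mul, ENNReal.toReal_ofReal (by linarith),
      ENNReal.toReal_ofReal (by linarith)] at this
  have hDenR : cstar * (1 - s) ≤ (μ {ω | U ω ≥ s}).toReal := by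
    have := ENNReal.toReal_mono hDfin hDlow
    rwa [ENNReal.toReal_mul, ENNReal.toReal_ofReal (by linarith),
      ENNReal.toReal_ofReal (by linarith)] at this
  have hDenR' : cstar * (p - e) ≤ (μ {ω | U ω ≥ s}).toReal := by
    refine le_trans ?_ hDenR
    have : p - e ≤ 1 - s := by linarith
    nlinarith
  have hmain : (μ (A ∩ {ω | U ω ≥ s})).toReal / (μ {ω | U ω ≥ s}).toReal ≤
      cStar * (e - s) / (cstar * (p - e)) := by
    apply div_le_div₀ (mul_nonneg (le_trans hc0.le hcc) (by linarith)) hNumR (by positivity) hDenR'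
  refine ⟨hDpos, hmain, ?_⟩
  intro α ε l hα hε hl h
  refine le_trans hmain ?_
  subst hl
  have hcS : 0 < cStar := lt_of_lt_of_le hc0 hcc
  rw [div_le_div_iff₀ (by positivity) (by positivity)]
  have h3 : 0 < 3 * (cStar / cstar) * α := by positivity
  have h2 : cStar * (e - s) ≤ cStar * (ε / (3 * (cStar / cstar) * α) * (p - e)) := by
    nlinarith
  have h4 : cStar * (ε / (3 * (cStar / cstar) * α) * (p - e)) * (3 * α)
      = ε * (cstar * (p - e)) := by
    field_simp
  nlinarith
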